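/- Let α ∈ (0, 1) and let Z_1, …, Z_{n+1} be i.i.d. real-valued random variables. Let k = ⌈(1−α)(n+1)⌉. If k ≤ n, let Q̂ denote the k-th smallest value among Z_1, …, Z_n; then P(Z_{n+1} ≤ Q̂) ≥ 1 − α. -/

import Mathlib

open MeasureTheory ProbabilityTheory
open scoped ENNReal

/-- The `k`-th order statistic (the `k`-th smallest value, `1 ≤ k ≤ n`) of `w : Fin n → ℝ`,
obtained by sorting the values in nondecreasing order. Junk value `0` when `k - 1 ≥ n`. -/
noncomputable def orderStat {n : ℕ} (w : Fin n → ℝ) (k : ℕ) : ℝ :=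
  if h : k - 1 < n then (w ∘ Tuple.sort w) ⟨k - 1, h⟩ else 0

/-- Rank characterization of the order statistic. -/
lemma le_orderStat_iff {n k : ℕ} (hk1 : 1 ≤ k) (hkn : k ≤ n) (w : Fin n → ℝ) (t : ℝ) :
    t ≤ orderStat w k ↔ (Finset.univ.filter fun i => w i < t).card < k := by
  classical
  have hn : k - 1 < n := lt_of_lt_of_le (Nat.sub_lt hk1 one_pos) hkn
  have hmono := Tuple.monotone_sort w
  set σ := Tuple.sort w with hσ
  have hcard : (Finset.univ.filter fun i => w i < t).card
      = (Finset.univ.filter fun j => (w ∘ σ) j < t).card := by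
    simp only [Finset.card_filter, Function.comp]
    exact (Equiv.sum_comp σ fun i => if w i < t then 1 else 0).symm
  rw [orderStat, dif_pos hn, hcard]
  set K : Fin n := ⟨k - 1, hn⟩ with hK
  constructor
  · intro h
    have hsub : (Finset.univ.filter fun j => (w ∘ σ) j < t) ⊆ Finset.Iio K := by
      intro j hj
      simp only [Finset.mem_filter] at hj
      rw [Finset.mem_Iio]
      by_contra hle
      have h2 : (w ∘ σ) K ≤ (w ∘ σ) j := hmono (not_lt.mp hle)
      exact absurd (lt_of_lt_of_le hj.2 (h.trans h2)) (lt_irrefl _)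
    have := Finset.card_le_card hsub
    rw [Fin.card_Iio] at this
    exact lt_of_le_of_lt this (Nat.sub_lt hk1 one_pos)
  · intro h
    by_contra hlt
    push_neg at hlt
    have hsub : Finset.Iic K ⊆ (Finset.univ.filter fun j => (w ∘ σ) j < t) := by
      intro j hj
      rw [Finset.mem_Iic] at hj
      simp only [Finset.mem_filter, Finset.mem_univ, true_and]
      exact lt_of_le_of_lt (hmono hj) hlt
    have := Finset.card_le_card hsub
    rw [Fin.card_Iic] at this
    have hKv : (K : ℕ) = k - 1 := rfl
    omega

/-- At least `k` of the values have strict rank below `k`. -/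
lemma le_card_lowrank {m k : ℕ} (hk : k ≤ m) (v : Fin m → ℝ) :
    k ≤ (Finset.univ.filter fun j =>
      (Finset.univ.filter fun i => v i < v j).card < k).card := by
  classical
  have hmono := Tuple.monotone_sort v
  set σ := Tuple.sort v with hσ
  have hrank : ∀ l : Fin m,
      (Finset.univ.filter fun i => v i < (v ∘ σ) l).card ≤ (l : ℕ) := by
    intro l
    have hc : (Finset.univ.filter fun i => v i < (v ∘ σ) l).card
        = (Finset.univ.filter fun j => (v ∘ σ) j < (v ∘ σ) l).card := by
      simp only [Finset.card_filter, Function.comp]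
      exact (Equiv.sum_comp σ fun i => if v i < (v ∘ σ) l then 1 else 0).symm
    rw [hc]
    have hsub : (Finset.univ.filter fun j => (v ∘ σ) j < (v ∘ σ) l) ⊆ Finset.Iio l := by
      intro j hj
      simp only [Finset.mem_filter] at hj
      rw [Finset.mem_Iio]
      by_contra hle
      exact absurd (lt_of_lt_of_le hj.2 (hmono (not_lt.mp hle))) (lt_irrefl _)
    calc (Finset.univ.filter fun j => (v ∘ σ) j < (v ∘ σ) l).card
        ≤ (Finset.Iio l).card := Finset.card_le_card hsub
      _ = (l : ℕ) := Fin.card_Iio l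
  have := Finset.card_le_card_of_injOn
    (f := fun i : Fin k => σ ⟨(i : ℕ), lt_of_lt_of_le i.2 hk⟩)
    (s := (Finset.univ : Finset (Fin k)))
    (t := Finset.univ.filter fun j =>
      (Finset.univ.filter fun i => v i < v j).card < k)
    (fun i _ => by
      simp only [Finset.mem_coe, Finset.mem_filter, Finset.mem_univ, true_and]
      exact lt_of_le_of_lt (hrank ⟨(i : ℕ), lt_of_lt_of_le i.2 hk⟩) i.2)
    (fun a _ b _ hab => by
      have h1 := σ.injective hab
      have h2 : (a : ℕ) = (b : ℕ) := by simpa using h1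
      exact Fin.ext h2)
  simpa using this

/-- Measurability of the low-rank event. -/
lemma measurableSet_rank_lt {m k : ℕ} {Ω : Type*} [MeasurableSpace Ω] (Z : Fin m → Ω → ℝ)
    (hmeas : ∀ i, Measurable (Z i)) (j : Fin m) :
    MeasurableSet {ω | (Finset.univ.filter fun i => Z i ω < Z j ω).card < k} := by
  classical
  have hm : Measurable fun ω => (Finset.univ.filter fun i => Z i ω < Z j ω).card := by
    simp only [Finset.card_filter]
    exact Finset.measurable_sum _ fun i _ =>
      Measurable.ite (measurableSet_lt (hmeas i) (hmeas j)) measurable_const measurable_const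
  exact hm ((Set.to_countable (Set.Iio k)).measurableSet)

/-- The product of identical probability measures is exchangeable. -/
lemma pi_comp_equiv_measure {m : ℕ} (ν : Measure ℝ) [IsProbabilityMeasure ν] (e : Fin m ≃ Fin m)
    {A : Set (Fin m → ℝ)} (hA : MeasurableSet A) :
    Measure.pi (fun _ : Fin m => ν) ((fun v => v ∘ e) ⁻¹' A)
      = Measure.pi (fun _ : Fin m => ν) A := by
  have hme : Measurable fun v : Fin m → ℝ => v ∘ e :=
    measurable_pi_lambda _ fun i => measurable_pi_apply (e i)
  have hmap : (Measure.pi (fun _ : Fin m => ν)).map (fun v => v ∘ e)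
      = Measure.pi (fun _ : Fin m => ν) := by
    refine (Measure.pi_eq fun s hs => ?_).symm
    rw [Measure.map_apply hme (MeasurableSet.univ_pi hs)]
    have hpre : (fun v : Fin m → ℝ => v ∘ e) ⁻¹' Set.univ.pi s
        = Set.univ.pi (fun j => s (e.symm j)) := by
      ext v
      simp only [Set.mem_preimage, Set.mem_pi, Set.mem_univ, true_implies, Function.comp]
      constructor
      · intro h j; simpa using h (e.symm j)
      · intro h i; simpa using h (e i)
    rw [hpre, Measure.pi_pi]
    exact e.symm.prod_comp fun i => ν (s i)
  conv_rhs => rw [← hmap]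
  rw [Measure.map_apply hme hA]

/-- Quantile-inflation coverage lower bound for i.i.d. variables: if `Z 1, …, Z (n+1)` are
i.i.d., `α ∈ (0,1)`, `k = ⌈(1-α)(n+1)⌉ ≤ n` and `Q̂` is the `k`-th smallest value among
`Z 1, …, Z n`, then `P(Z (n+1) ≤ Q̂) ≥ 1 - α`. -/
theorem prob_le_inflated_quantile_of_iid {Ω : Type*} [MeasurableSpace Ω]
    (μ : Measure Ω) [IsProbabilityMeasure μ] {n : ℕ}
    (Z : Fin (n + 1) → Ω → ℝ) (hmeas : ∀ i, Measurable (Z i))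
    (hindep : iIndepFun Z μ)
    (hident : ∀ i, IdentDistrib (Z i) (Z 0) μ μ)
    (α : ℝ) (hα : α ∈ Set.Ioo (0 : ℝ) 1)
    (hk : ⌈(1 - α) * ((n : ℝ) + 1)⌉₊ ≤ n) :
    ENNReal.ofReal (1 - α) ≤
      μ {ω | Z (Fin.last n) ω ≤
        orderStat (fun i : Fin n => Z i.castSucc ω) ⌈(1 - α) * ((n : ℝ) + 1)⌉₊} := by
  classical
  obtain ⟨hα0, hα1⟩ := hα
  set k := ⌈(1 - α) * ((n : ℝ) + 1)⌉₊ with hkdef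
  have hkpos : 1 ≤ k := Nat.one_le_iff_ne_zero.mpr <| by
    have h1a : (0:ℝ) < 1 - α := by linarith
    have : 0 < (1 - α) * ((n : ℝ) + 1) := by positivity
    exact (Nat.ceil_pos.mpr this).ne'
  -- the joint distribution is a product measure
  set φ : Ω → (Fin (n + 1) → ℝ) := fun ω i => Z i ω with hφ
  have hφm : Measurable φ := measurable_pi_lambda _ hmeas
  set m0 : Measure ℝ := μ.map (Z 0) with hm0
  have h0 : IsProbabilityMeasure m0 := Measure.isProbabilityMeasure_map (hmeas 0).aemeasurable
  have hpi : μ.map φ = Measure.pi (fun _ : Fin (n + 1) => m0) := by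
    refine (Measure.pi_eq fun s hs => ?_).symm
    rw [Measure.map_apply hφm (MeasurableSet.univ_pi hs)]
    have hpre : φ ⁻¹' Set.univ.pi s = ⋂ i ∈ (Finset.univ : Finset (Fin (n + 1))), Z i ⁻¹' s i := by
      ext ω
      simp [hφ, Set.mem_pi]
    rw [hpre, hindep.measure_inter_preimage_eq_mul Finset.univ fun i _ => hs i]
    refine Finset.prod_congr rfl fun i _ => ?_
    rw [hm0, ← (hident i).map_eq, Measure.map_apply (hmeas i) (hs i)]
  -- the low-rank events
  set E : Fin (n + 1) → Set Ω :=
    fun j => {ω | (Finset.univ.filter fun i => Z i ω < Z j ω).card < k} with hE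
  set A : Fin (n + 1) → Set (Fin (n + 1) → ℝ) :=
    fun j => {v | (Finset.univ.filter fun i => v i < v j).card < k} with hA
  have hAmeas : ∀ j, MeasurableSet (A j) :=
    fun j => measurableSet_rank_lt (fun i (v : Fin (n + 1) → ℝ) => v i)
      (fun i => measurable_pi_apply i) j
  have hEeq : ∀ j, E j = φ ⁻¹' A j := fun j => rfl
  have hEmeas : ∀ j, MeasurableSet (E j) := fun j => hφm (hAmeas j)
  have hμA : ∀ j, μ (E j) = Measure.pi (fun _ : Fin (n + 1) => m0) (A j) := by
    intro j
    rw [hEeq j, ← Measure.map_apply hφm (hAmeas j), hpi]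
  have hμE : ∀ j, μ (E j) = μ (E (Fin.last n)) := by
    intro j
    rw [hμA j, hμA (Fin.last n)]
    set e := Equiv.swap j (Fin.last n) with he
    have hAe : (fun v : Fin (n + 1) → ℝ => v ∘ e) ⁻¹' A (Fin.last n) = A j := by
      ext v
      simp only [Set.mem_preimage, hA, Set.mem_setOf_eq, Function.comp]
      have hc : (Finset.univ.filter fun i => v (e i) < v (e (Fin.last n))).card
          = (Finset.univ.filter fun i => v i < v (e (Fin.last n))).card := by
        simp only [Finset.card_filter]
        exact Equiv.sum_comp e fun i => if v i < v (e (Fin.last n)) then 1 else 0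
      rw [hc, he, Equiv.swap_apply_right]
    rw [← hAe, pi_comp_equiv_measure m0 e (hAmeas (Fin.last n))]
  -- the sum of probabilities is at least k
  have hsum : (k : ℝ≥0∞) ≤ ∑ j, μ (E j) := by
    have hpt : ∀ ω, (k : ℝ≥0∞) ≤ ∑ j, (E j).indicator (fun _ => (1 : ℝ≥0∞)) ω := by
      intro ω
      have hcomb := le_card_lowrank (le_trans hk (Nat.le_succ n)) (fun i => Z i ω)
      have hs : ∑ j, (E j).indicator (fun _ => (1 : ℝ≥0∞)) ω
          = ((Finset.univ.filter fun j =>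
              (Finset.univ.filter fun i => Z i ω < Z j ω).card < k).card : ℝ≥0∞) := by
        rw [Finset.card_filter, Nat.cast_sum]
        refine Finset.sum_congr rfl fun j _ => ?_
        by_cases hj : (Finset.univ.filter fun i => Z i ω < Z j ω).card < k
        · rw [if_pos hj, Set.indicator_of_mem (show ω ∈ E j from hj), Nat.cast_one]
        · rw [if_neg hj, Set.indicator_of_notMem (show ω ∉ E j from hj), Nat.cast_zero]
      rw [hs]
      exact_mod_cast hcomb
    calc (k : ℝ≥0∞) = ∫⁻ _, (k : ℝ≥0∞) ∂μ := by simp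
      _ ≤ ∫⁻ ω, ∑ j, (E j).indicator (fun _ => (1 : ℝ≥0∞)) ω ∂μ := lintegral_mono hpt
      _ = ∑ j, μ (E j) := by
          rw [lintegral_finset_sum _ fun j _ => measurable_const.indicator (hEmeas j)]
          refine Finset.sum_congr rfl fun j _ => ?_
          rw [lintegral_indicator (hEmeas j)]
          simp
  have htot : (k : ℝ≥0∞) ≤ ((n : ℝ≥0∞) + 1) * μ (E (Fin.last n)) := by
    calc (k : ℝ≥0∞) ≤ ∑ j, μ (E j) := hsum
      _ = ∑ j : Fin (n + 1), μ (E (Fin.last n)) := Finset.sum_congr rfl fun j _ => hμE j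
      _ = ((n : ℝ≥0∞) + 1) * μ (E (Fin.last n)) := by
          rw [Finset.sum_const, Finset.card_univ, Fintype.card_fin, nsmul_eq_mul]
          push_cast
          ring
  -- identify the target event
  have hset : {ω | Z (Fin.last n) ω ≤ orderStat (fun i : Fin n => Z i.castSucc ω) k}
      = E (Fin.last n) := by
    ext ω
    simp only [Set.mem_setOf_eq, hE]
    rw [le_orderStat_iff hkpos hk]
    have hc : (Finset.univ.filter fun i : Fin (n + 1) => Z i ω < Z (Fin.last n) ω).card
        = (Finset.univ.filter fun i : Fin n => Z i.castSucc ω < Z (Fin.last n) ω).card := by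
      simp only [Finset.card_filter]
      rw [Fin.sum_univ_castSucc]
      simp
    rw [hc]
  rw [hset]
  -- final arithmetic
  have h1 : ENNReal.ofReal (1 - α) * ((n : ℝ≥0∞) + 1) ≤ (k : ℝ≥0∞) := by
    have hle : (1 - α) * ((n : ℝ) + 1) ≤ (k : ℝ) := Nat.le_ceil _
    calc ENNReal.ofReal (1 - α) * ((n : ℝ≥0∞) + 1)
        = ENNReal.ofReal ((1 - α) * ((n : ℝ) + 1)) := by
          rw [ENNReal.ofReal_mul (by linarith)]
          congr 1
          rw [show ((n : ℝ) + 1) = ((n + 1 : ℕ) : ℝ) by push_cast; ring,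
            ENNReal.ofReal_natCast]
          push_cast
          ring
      _ ≤ ENNReal.ofReal (k : ℝ) := ENNReal.ofReal_le_ofReal hle
      _ = (k : ℝ≥0∞) := ENNReal.ofReal_natCast k
  have h2 := h1.trans htot
  rw [mul_comm ((n : ℝ≥0∞) + 1)] at h2
  exact (ENNReal.mul_le_mul_iff_left (by simp) (by simp)).mp h2
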